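/- Let p be a prime and T a group with a normal abelian subgroup N of index p of exponent dividing p, with σ ∈ T \ N. If σ^p ∈ N^{(σ-1)^{p-1}} (that is, σ^p = ν^{(σ-1)^{p-1}} for some ν ∈ N, where ν^{(σ-1)} := σνσ^{-1}ν^{-1}), then there exists τ ∈ T \ N with τ^p = 1; consequently T ≅ N ⋊ Z/p (the extension splits). -/

import Mathlib

open scoped Pointwise

private lemma pow_conj_list {T : Type*} [Group T] (σ a : T) (n : ℕ) :
    (a * σ) ^ n = ((List.range n).map (fun i => σ ^ i * a * (σ ^ i)⁻¹)).prod * σ ^ n := by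
  induction n with
  | zero => simp
  | succ n ih =>
    rw [pow_succ, ih, List.range_succ, List.map_append, List.prod_append]
    simp only [List.map_cons, List.map_nil, List.prod_cons, List.prod_nil, mul_one]
    rw [pow_succ]
    group

private lemma list_prod_eq_finset_prod {M : Type*} [CommMonoid M] (f : ℕ → M) (n : ℕ) :
    ((List.range n).map f).prod = ∏ i ∈ Finset.range n, f i := by
  induction n with
  | zero => simp
  | succ n ih =>
    rw [List.range_succ, List.map_append, List.prod_append, Finset.prod_range_succ, ih]
    simp

/-- Let `p` be a prime and `T` a group with a normal abelian subgroup `N`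
of index `p` of exponent dividing `p`, with `σ ∈ T \ N`.  If
`σ^p ∈ N^{(σ-1)^{p-1}}`, i.e. `σ^p = ν^{(σ-1)^{p-1}}` for some `ν ∈ N`, where
`ν^{(σ-1)} := σνσ⁻¹ν⁻¹`, then there exists `τ ∈ T \ N` with `τ^p = 1`; consequently
the extension splits: `⟨τ⟩` is a complement of `N` in `T`, so `T ≅ N ⋊ Z/p`. -/
theorem stmt10 (p : ℕ) (hp : p.Prime) {T : Type*} [Group T]
    (N : Subgroup T) [N.Normal] (hidx : N.index = p)
    (hab : ∀ x ∈ N, ∀ y ∈ N, Commute x y)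
    (hexp : ∀ x ∈ N, x ^ p = 1)
    (σ : T) (hσ : σ ∉ N)
    (hyp : ∃ ν ∈ N, σ ^ p = (fun x : T => σ * x * σ⁻¹ * x⁻¹)^[p - 1] ν) :
    ∃ τ : T, τ ∉ N ∧ τ ^ p = 1 ∧ Subgroup.IsComplement' N (Subgroup.zpowers τ) := by
  obtain ⟨ν, hν, hσp⟩ := hyp
  have hNn : N.Normal := inferInstance
  have hp1 : p - 1 + 1 = p := Nat.succ_pred_eq_of_pos hp.pos
  haveI : NeZero p := ⟨hp.ne_zero⟩
  haveI : Fact p.Prime := ⟨hp⟩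
  letI cg : CommGroup ↥N :=
    { (inferInstance : Group ↥N) with
      mul_comm := fun a b => Subtype.ext (hab a a.2 b b.2) }
  haveI mod : Module (ZMod p) (Additive ↥N) := AddCommGroup.zmodModule (by
    intro x
    refine Additive.toMul.injective ?_
    rw [toMul_nsmul, toMul_zero]
    exact Subtype.ext (by simpa using hexp _ x.toMul.2))
  let ψ : ↥N →* ↥N :=
    { toFun := fun x => ⟨σ * ↑x * σ⁻¹, hNn.conj_mem _ x.2 σ⟩
      map_one' := by ext; simp
      map_mul' := fun x y => by
        ext
        push_cast
        group }
  have hψcoe : ∀ a : ↥N, ((ψ a : ↥N) : T) = σ * ↑a * σ⁻¹ := fun a => rfl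
  let s₀ : Additive ↥N →ₗ[ZMod p] Additive ↥N := (MonoidHom.toAdditive ψ).toZModLinearMap p
  let s : Module.End (ZMod p) (Additive ↥N) := s₀
  -- polynomial identity (X-1)^(p-1) = ∑ X^i over ZMod p
  have hpoly : ((Polynomial.X - 1 : Polynomial (ZMod p))) ^ (p - 1)
      = ∑ i ∈ Finset.range p, (Polynomial.X : Polynomial (ZMod p)) ^ i := by
    have hX : (Polynomial.X - 1 : Polynomial (ZMod p)) ≠ 0 := by
      simpa using Polynomial.X_sub_C_ne_zero (R := ZMod p) 1
    apply mul_left_cancel₀ hX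
    rw [mul_geom_sum, ← pow_succ', hp1]
    have := sub_pow_char (R := Polynomial (ZMod p)) (x := Polynomial.X) (y := 1) (p := p)
    simpa using this
  -- transfer to endomorphisms
  have hend : (s - 1) ^ (p - 1)
      = ∑ i ∈ Finset.range p, (s ^ i) := by
    have := congrArg (Polynomial.aeval s) hpoly
    simpa using this
  set φ : T → T := fun x : T => σ * x * σ⁻¹ * x⁻¹ with hφ
  have hφmem : ∀ k, φ^[k] ν ∈ N := by
    intro k
    induction k with
    | zero => simpa using hν
    | succ k ihk =>
      rw [Function.iterate_succ_apply']
      exact N.mul_mem (hNn.conj_mem _ ihk σ) (N.inv_mem ihk)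
  set v : Additive ↥N := Additive.ofMul (⟨ν, hν⟩ : ↥N) with hv
  have hiter : ∀ k, (((s - 1) ^ k) v).toMul
      = (⟨φ^[k] ν, hφmem k⟩ : ↥N) := by
    intro k
    induction k with
    | zero => simp [hv]
    | succ k ihk =>
      rw [pow_succ', Module.End.mul_apply]
      have : ((s - 1) (((s - 1) ^ k) v)).toMul
          = ψ (⟨φ^[k] ν, hφmem k⟩ : ↥N) * (⟨φ^[k] ν, hφmem k⟩ : ↥N)⁻¹ := by
        rw [LinearMap.sub_apply, Module.End.one_apply, toMul_sub, div_eq_mul_inv]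
        have hs : (s (((s - 1) ^ k) v)).toMul = ψ ((((s - 1) ^ k) v).toMul) := rfl
        rw [hs, ihk]
      rw [this]
      ext
      show (↑(ψ (⟨φ^[k] ν, hφmem k⟩ : ↥N) * (⟨φ^[k] ν, hφmem k⟩ : ↥N)⁻¹) : T) = φ^[k+1] ν
      rw [Function.iterate_succ_apply']
      push_cast [hψcoe]
      simp [hφ, mul_assoc]
  have hconj : ∀ i : ℕ, σ ^ i * ν * (σ ^ i)⁻¹ ∈ N := fun i => hNn.conj_mem _ hν (σ ^ i)
  have hpow : ∀ i : ℕ, ((s ^ i) v).toMul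
      = (⟨σ ^ i * ν * (σ ^ i)⁻¹, hconj i⟩ : ↥N) := by
    intro i
    induction i with
    | zero => simp [hv]
    | succ i ihi =>
      rw [pow_succ', Module.End.mul_apply]
      have : (s ((s ^ i) v)).toMul
          = ψ (⟨σ ^ i * ν * (σ ^ i)⁻¹, hconj i⟩ : ↥N) := by
        rw [← ihi]; rfl
      rw [this]
      ext
      push_cast [hψcoe]
      rw [pow_succ' σ i, mul_inv_rev]
      simp [mul_assoc]
  -- the key product identity in ↥N
  have hprodg : (((∏ i ∈ Finset.range p, (⟨σ ^ i * ν * (σ ^ i)⁻¹, hconj i⟩ : ↥N)) : ↥N) : T) = σ ^ p := by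
    have h1 : (∏ i ∈ Finset.range p, (⟨σ ^ i * ν * (σ ^ i)⁻¹, hconj i⟩ : ↥N))
        = (⟨φ^[p-1] ν, hφmem (p-1)⟩ : ↥N) := by
      refine Additive.ofMul.injective ?_
      have h2 : Additive.ofMul (∏ i ∈ Finset.range p, (⟨σ ^ i * ν * (σ ^ i)⁻¹, hconj i⟩ : ↥N))
          = (∑ i ∈ Finset.range p, (s ^ i)) v := by
        rw [LinearMap.sum_apply]
        refine Additive.toMul.injective ?_
        rw [toMul_ofMul, toMul_sum]
        exact (Finset.prod_congr rfl fun i _ => (hpow i).symm)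
      rw [h2, ← hend]
      refine Additive.toMul.injective ?_
      rw [hiter (p-1)]
      simp
    rw [h1]
    exact hσp.symm
  have E2 : ((List.range p).map (fun i => σ ^ i * ν⁻¹ * (σ ^ i)⁻¹)).prod = (σ ^ p)⁻¹ := by
    have hco : ((((List.range p).map (fun i => (⟨σ ^ i * ν * (σ ^ i)⁻¹, hconj i⟩ : ↥N)⁻¹)).prod : ↥N) : T)
        = ((List.range p).map (fun i => σ ^ i * ν⁻¹ * (σ ^ i)⁻¹)).prod := by
      have h3 := map_list_prod N.subtype ((List.range p).map (fun i => (⟨σ ^ i * ν * (σ ^ i)⁻¹, hconj i⟩ : ↥N)⁻¹))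
      rw [List.map_map] at h3
      rw [show ((((List.range p).map (fun i => (⟨σ ^ i * ν * (σ ^ i)⁻¹, hconj i⟩ : ↥N)⁻¹)).prod : ↥N) : T) = N.subtype (((List.range p).map (fun i => (⟨σ ^ i * ν * (σ ^ i)⁻¹, hconj i⟩ : ↥N)⁻¹)).prod) from rfl, h3]
      congr 1
      apply List.map_congr_left
      intro i _
      show (((⟨σ ^ i * ν * (σ ^ i)⁻¹, hconj i⟩ : ↥N)⁻¹ : ↥N) : T) = σ ^ i * ν⁻¹ * (σ ^ i)⁻¹
      push_cast
      group
    rw [← hco, list_prod_eq_finset_prod, Finset.prod_inv_distrib]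
    push_cast
    rw [hprodg]
  set τ : T := ν⁻¹ * σ with hτ
  have hτN : τ ∉ N := fun h => hσ (by simpa [hτ] using N.mul_mem hν h)
  have hτp : τ ^ p = 1 := by rw [hτ, pow_conj_list σ ν⁻¹ p, E2, inv_mul_cancel]
  refine ⟨τ, hτN, hτp, ?_⟩
  set q := QuotientGroup.mk' N with hq
  have hcardQ : Nat.card (T ⧸ N) = p := by rw [← Subgroup.index_eq_card, hidx]
  have hq1 : q τ ≠ 1 := by
    simpa [hq, QuotientGroup.mk'_apply, QuotientGroup.eq_one_iff] using hτN
  have horder : orderOf (q τ) = p := by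
    have hdvd : orderOf (q τ) ∣ p := orderOf_dvd_of_pow_eq_one (by
      rw [← map_pow, hτp, map_one])
    rcases hp.eq_one_or_self_of_dvd _ hdvd with h | h
    · exact absurd (orderOf_eq_one_iff.mp h) hq1
    · exact h
  have hdisj : Disjoint N (Subgroup.zpowers τ) := by
    rw [Subgroup.disjoint_def]
    intro x hxN hxZ
    obtain ⟨m, rfl⟩ := Subgroup.mem_zpowers_iff.mp hxZ
    have h1 : q τ ^ m = 1 := by
      rw [← map_zpow]
      exact (QuotientGroup.eq_one_iff _).mpr hxN
    have hdvd : ((p : ℕ) : ℤ) ∣ m := by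
      rw [← horder]
      exact orderOf_dvd_iff_zpow_eq_one.mpr h1
    obtain ⟨k, rfl⟩ := hdvd
    rw [zpow_mul, zpow_natCast, hτp, one_zpow]
  have hgen : Subgroup.zpowers (q τ) = ⊤ := by
    haveI : Finite (T ⧸ N) := Nat.finite_of_card_ne_zero (by rw [hcardQ]; exact hp.ne_zero)
    apply Subgroup.eq_top_of_card_eq
    rw [Nat.card_zpowers, horder, hcardQ]
  have hmul : (N : Set T) * (Subgroup.zpowers τ : Set T) = Set.univ := by
    rw [Set.eq_univ_iff_forall]
    intro g
    have hg : q g ∈ Subgroup.zpowers (q τ) := hgen ▸ Subgroup.mem_top _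
    obtain ⟨m, hm⟩ := Subgroup.mem_zpowers_iff.mp hg
    refine ⟨g * (τ ^ m)⁻¹, ?_, τ ^ m, Subgroup.zpow_mem _ (Subgroup.mem_zpowers τ) m, by group⟩
    have h2 : q (g * (τ ^ m)⁻¹) = 1 := by
      rw [map_mul, map_inv, map_zpow, hm, mul_inv_cancel]
    exact (QuotientGroup.eq_one_iff _).mp h2
  exact Subgroup.isComplement'_of_disjoint_and_mul_eq_univ hdisj hmul
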